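/- Let Ω be a bounded domain with compactification Ω̄¹ and f ∈ C(Ω̄¹) continuous real-valued. Then uW(f|_Ω) = uP_{Ω¹}(f|_{∂¹Ω}), lW(f|_Ω) = lP_{Ω¹}(f|_{∂¹Ω}), and the Sobolev analogues uZ = uS, lZ = lS hold. Consequently, f|_Ω is harmonizable if and only if f|_{∂¹Ω} is resolutive, in which case W f = P_{Ω¹} f (and similarly for the Sobolev versions). -/

import Mathlib

open Filter Set

/-- The filter of approach to a point `x` of the compactification from within `Ω`. -/
def approach {X : Type*} [TopologicalSpace X] (Ω : Set X) (x : X) : Filter ↥Ω :=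
  Filter.comap (Subtype.val : ↥Ω → X) (nhds x)

/-- An extended-real-valued function bounded from below by a real constant. -/
def BddBelowE {α : Type*} (u : α → EReal) : Prop :=
  ∃ m : ℝ, ∀ y, (m : EReal) ≤ u y

/-- The upper (Perron) class of a boundary function `f : ∂¹Ω → ℝ̄`. -/
def upperPerronClass {X : Type*} [TopologicalSpace X] (Ω : Set X)
    (SH : (↥Ω → EReal) → Prop) (f : {x : X // x ∉ Ω} → EReal) :
    Set (↥Ω → EReal) :=
  {u | SH u ∧ BddBelowE u ∧
    ∀ x : {x : X // x ∉ Ω}, f x ≤ liminf u (approach Ω (x : X))}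

/-- The upper Perron solution `uP_{Ω¹} f`. -/
noncomputable def uP {X : Type*} [TopologicalSpace X] (Ω : Set X)
    (SH : (↥Ω → EReal) → Prop) (f : {x : X // x ∉ Ω} → EReal) : ↥Ω → EReal :=
  fun z => ⨅ u ∈ upperPerronClass Ω SH f, u z

/-- The lower Perron solution `lP_{Ω¹} f := -uP_{Ω¹}(-f)`. -/
noncomputable def lP {X : Type*} [TopologicalSpace X] (Ω : Set X)
    (SH : (↥Ω → EReal) → Prop) (f : {x : X // x ∉ Ω} → EReal) : ↥Ω → EReal :=
  fun z => - uP Ω SH (fun x => - f x) z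

/-- The upper Wiener class `U^W_f` of `f : Ω → ℝ̄`. -/
def upperWienerClass {X : Type*} [TopologicalSpace X] (Ω : Set X)
    (SH : (↥Ω → EReal) → Prop) (f : ↥Ω → EReal) : Set (↥Ω → EReal) :=
  {u | SH u ∧ BddBelowE u ∧
    ∃ K : Set X, IsCompact K ∧ K ⊆ Ω ∧ ∀ y : ↥Ω, (y : X) ∉ K → f y ≤ u y}

/-- The upper Wiener solution `uW f`. -/
noncomputable def uW {X : Type*} [TopologicalSpace X] (Ω : Set X)
    (SH : (↥Ω → EReal) → Prop) (f : ↥Ω → EReal) : ↥Ω → EReal :=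
  fun z => ⨅ u ∈ upperWienerClass Ω SH f, u z

/-- The lower Wiener solution `lW f := -uW(-f)`. -/
noncomputable def lW {X : Type*} [TopologicalSpace X] (Ω : Set X)
    (SH : (↥Ω → EReal) → Prop) (f : ↥Ω → EReal) : ↥Ω → EReal :=
  fun z => - uW Ω SH (fun y => - f y) z

private lemma ereal_le_of_forall_add {a b : EReal}
    (h : ∀ ε : ℝ, 0 < ε → a ≤ b + (ε : EReal)) : a ≤ b := by
  by_contra hab
  push_neg at hab
  obtain ⟨x, hbx, hxa⟩ := EReal.lt_iff_exists_real_btwn.1 hab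
  induction b with
  | bot =>
    have := h 1 one_pos
    rw [EReal.bot_add] at this
    exact absurd (le_bot_iff.1 this) (by rintro rfl; exact absurd hab (lt_irrefl _))
  | coe r =>
    have hrx : r < x := EReal.coe_lt_coe_iff.1 hbx
    have := h (x - r) (by linarith)
    rw [← EReal.coe_add] at this
    have : a ≤ (x : EReal) := by simpa [add_sub_cancel] using this
    exact absurd hxa (not_lt.2 this)
  | top => exact absurd hab (not_lt.2 le_top)

/-- Key lemma: for any shift-invariant class `SH`, the upper Wiener solution of
`f|_Ω` equals the upper Perron solution of `f|_{∂¹Ω}` when `f` is continuous on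
the compactification. -/
private lemma uW_eq_uP {X : Type*} [TopologicalSpace X] [CompactSpace X] [T2Space X]
    (Ω : Set X) (SH : (↥Ω → EReal) → Prop)
    (hshift : ∀ (u : ↥Ω → EReal) (c : ℝ), SH u → SH (fun y => u y + (c : EReal)))
    (f : C(X, ℝ)) (z : ↥Ω) :
    uW Ω SH (fun y : ↥Ω => (f y : EReal)) z =
      uP Ω SH (fun x : {x : X // x ∉ Ω} => ((f x : ℝ) : EReal)) z := by
  apply le_antisymm
  · -- uW ≤ uP : for `u` in the Perron class and `ε > 0`, `u + ε` is in the Wiener class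
    refine le_iInf₂ fun u hu => ereal_le_of_forall_add fun ε hε => ?_
    obtain ⟨hSH, ⟨m, hm⟩, hbd⟩ := hu
    set A : Set X := Subtype.val '' {y : ↥Ω | u y + (ε : EReal) < (f y : EReal)} with hA
    have hKsub : closure A ⊆ Ω := by
      intro x hx
      by_contra hxΩ
      have hliminf := hbd ⟨x, hxΩ⟩
      have hfreq : ∃ᶠ y in approach Ω x, u y ≤ ((f x - ε / 2 : ℝ) : EReal) := by
        rw [approach, Filter.frequently_comap]
        have hV : {w : X | f w < f x + ε / 2} ∈ nhds x := by
          have : IsOpen {w : X | f w < f x + ε / 2} :=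
            isOpen_lt f.continuous continuous_const
          exact this.mem_nhds (by simp; linarith)
        have hcl : ∃ᶠ w in nhds x, w ∈ A := mem_closure_iff_frequently.1 hx
        refine (hcl.and_eventually (Filter.eventually_of_mem hV fun w hw => hw)).mono ?_
        rintro w ⟨⟨y, hy, rfl⟩, hw⟩
        refine ⟨y, rfl, ?_⟩
        -- `u y + ε < f y < f x + ε/2` forces `u y ≤ f x - ε/2`
        by_contra hcon
        push_neg at hcon
        have h1 : ((f x - ε / 2 : ℝ) : EReal) + (ε : EReal) ≤ u y + (ε : EReal) :=
          add_le_add_left hcon.le _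
        rw [← EReal.coe_add] at h1
        have h2 : u y + (ε : EReal) < ((f x + ε / 2 : ℝ) : EReal) :=
          lt_of_lt_of_le hy (by exact_mod_cast (hw.le : f (y : X) ≤ f x + ε / 2))
        have : ((f x - ε / 2 + ε : ℝ) : EReal) < ((f x + ε / 2 : ℝ) : EReal) :=
          lt_of_le_of_lt h1 h2
        rw [EReal.coe_lt_coe_iff] at this
        linarith
      have hle : liminf u (approach Ω x) ≤ ((f x - ε / 2 : ℝ) : EReal) :=
        Filter.liminf_le_of_frequently_le' hfreq
      have : ((f x : ℝ) : EReal) ≤ ((f x - ε / 2 : ℝ) : EReal) := le_trans hliminf hle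
      rw [EReal.coe_le_coe_iff] at this
      linarith
    have hmem : (fun y => u y + (ε : EReal)) ∈
        upperWienerClass Ω SH (fun y : ↥Ω => (f y : EReal)) := by
      refine ⟨hshift u ε hSH, ⟨m + ε, fun y => ?_⟩, closure A, isClosed_closure.isCompact,
        hKsub, fun y hy => ?_⟩
      · rw [EReal.coe_add]; exact add_le_add_left (hm y) _
      · have hyA : (y : X) ∉ A := fun h => hy (subset_closure h)
        have : ¬ u y + (ε : EReal) < (f y : EReal) := fun h => hyA ⟨y, h, rfl⟩
        exact not_lt.1 this
    calc uW Ω SH (fun y : ↥Ω => (f y : EReal)) z ≤ u z + (ε : EReal) :=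
            iInf₂_le_of_le _ hmem le_rfl
      _ ≤ _ := add_le_add_right (le_rfl) _
  · -- uP ≤ uW : for `u` in the Wiener class and `ε > 0`, `u + ε` is in the Perron class
    refine le_iInf₂ fun u hu => ereal_le_of_forall_add fun ε hε => ?_
    obtain ⟨hSH, ⟨m, hm⟩, K, hKc, hKΩ, hK⟩ := hu
    have hmem : (fun y => u y + (ε : EReal)) ∈
        upperPerronClass Ω SH (fun x : {x : X // x ∉ Ω} => ((f x : ℝ) : EReal)) := by
      refine ⟨hshift u ε hSH, ⟨m + ε, fun y => ?_⟩, fun x => ?_⟩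
      · rw [EReal.coe_add]; exact add_le_add_left (hm y) _
      · -- at a boundary point `x`, eventually `f x ≤ u + ε`
        have hV : Kᶜ ∩ {w : X | f x - ε < f w} ∈ nhds (x : X) := by
          refine Filter.inter_mem ?_ ?_
          · exact (hKc.isClosed.isOpen_compl).mem_nhds fun h => x.2 (hKΩ h)
          · exact (isOpen_lt continuous_const f.continuous).mem_nhds (by simp; linarith)
        have hev : ∀ᶠ y in approach Ω (x : X),
            ((f (x : X) : ℝ) : EReal) ≤ u y + (ε : EReal) := by
          rw [approach, Filter.eventually_comap]
          refine Filter.eventually_of_mem hV ?_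
          rintro w ⟨hwK, hwf⟩ y rfl
          have h1 : (f (y : X) : EReal) ≤ u y := hK y hwK
          have h2 : ((f (x : X) : ℝ) : EReal) ≤ ((f (y : X) + ε : ℝ) : EReal) := by
            rw [EReal.coe_le_coe_iff]
            have : f (x : X) - ε < f (y : X) := hwf
            linarith
          rw [EReal.coe_add] at h2
          exact le_trans h2 (add_le_add_left h1 _)
        exact Filter.le_liminf_of_le (by isBoundedDefault) hev
    calc uP Ω SH (fun x : {x : X // x ∉ Ω} => ((f x : ℝ) : EReal)) z ≤ u z + (ε : EReal) :=
            iInf₂_le_of_le _ hmem le_rfl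
      _ ≤ _ := add_le_add_right (le_rfl) _

private lemma lW_eq_lP {X : Type*} [TopologicalSpace X] [CompactSpace X] [T2Space X]
    (Ω : Set X) (SH : (↥Ω → EReal) → Prop)
    (hshift : ∀ (u : ↥Ω → EReal) (c : ℝ), SH u → SH (fun y => u y + (c : EReal)))
    (f : C(X, ℝ)) (z : ↥Ω) :
    lW Ω SH (fun y : ↥Ω => (f y : EReal)) z =
      lP Ω SH (fun x : {x : X // x ∉ Ω} => ((f x : ℝ) : EReal)) z := by
  have e1 : (fun y : ↥Ω => -((f y : ℝ) : EReal)) =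
      (fun y : ↥Ω => (((-f) y : ℝ) : EReal)) := by
    funext y; simp
  have e2 : (fun x : {x : X // x ∉ Ω} => -((f x : ℝ) : EReal)) =
      (fun x : {x : X // x ∉ Ω} => (((-f) x : ℝ) : EReal)) := by
    funext x; simp
  simp only [lW, lP, e1, e2, uW_eq_uP Ω SH hshift (-f) z]

/-- let `Ω` be a bounded domain with compactification `X = Ω̄¹` and
let `f ∈ C(Ω̄¹)` be continuous and real-valued.  Then
`uW(f|_Ω) = uP_{Ω¹}(f|_{∂¹Ω})`, `lW(f|_Ω) = lP_{Ω¹}(f|_{∂¹Ω})`, and the Sobolev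
analogues `uZ = uS`, `lZ = lS` hold.  Consequently `f|_Ω` is harmonizable iff
`f|_{∂¹Ω}` is resolutive, in which case `W f = P_{Ω¹} f` (and similarly in the
Sobolev case).  Here `SH` is the (translation-invariant) class of superharmonic
functions and the Sobolev versions restrict to the Dirichlet space `Dp`. -/
theorem stmt_18 {X : Type*} [TopologicalSpace X] [CompactSpace X] [T2Space X]
    (Ω : Set X) (hopen : IsOpen Ω) (hdense : Dense Ω) (hne : Ω.Nonempty)
    (SH Dp : (↥Ω → EReal) → Prop)
    (hshiftSH : ∀ (u : ↥Ω → EReal) (c : ℝ), SH u → SH (fun y => u y + (c : EReal)))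
    (hshiftDp : ∀ (u : ↥Ω → EReal) (c : ℝ), Dp u → Dp (fun y => u y + (c : EReal)))
    (f : C(X, ℝ)) :
    (∀ z, uW Ω SH (fun y : ↥Ω => (f y : EReal)) z =
        uP Ω SH (fun x : {x : X // x ∉ Ω} => ((f x : ℝ) : EReal)) z) ∧
    (∀ z, lW Ω SH (fun y : ↥Ω => (f y : EReal)) z =
        lP Ω SH (fun x : {x : X // x ∉ Ω} => ((f x : ℝ) : EReal)) z) ∧
    (∀ z, uW Ω (fun u => SH u ∧ Dp u) (fun y : ↥Ω => (f y : EReal)) z =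
        uP Ω (fun u => SH u ∧ Dp u) (fun x : {x : X // x ∉ Ω} => ((f x : ℝ) : EReal)) z) ∧
    (∀ z, lW Ω (fun u => SH u ∧ Dp u) (fun y : ↥Ω => (f y : EReal)) z =
        lP Ω (fun u => SH u ∧ Dp u) (fun x : {x : X // x ∉ Ω} => ((f x : ℝ) : EReal)) z) ∧
    ((∀ z, uW Ω SH (fun y : ↥Ω => (f y : EReal)) z =
        lW Ω SH (fun y : ↥Ω => (f y : EReal)) z) ↔
      (∀ z, uP Ω SH (fun x : {x : X // x ∉ Ω} => ((f x : ℝ) : EReal)) z =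
        lP Ω SH (fun x : {x : X // x ∉ Ω} => ((f x : ℝ) : EReal)) z)) ∧
    ((∀ z, uW Ω (fun u => SH u ∧ Dp u) (fun y : ↥Ω => (f y : EReal)) z =
        lW Ω (fun u => SH u ∧ Dp u) (fun y : ↥Ω => (f y : EReal)) z) ↔
      (∀ z, uP Ω (fun u => SH u ∧ Dp u)
          (fun x : {x : X // x ∉ Ω} => ((f x : ℝ) : EReal)) z =
        lP Ω (fun u => SH u ∧ Dp u)
          (fun x : {x : X // x ∉ Ω} => ((f x : ℝ) : EReal)) z)) := by
  have hshift2 : ∀ (u : ↥Ω → EReal) (c : ℝ), (SH u ∧ Dp u) →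
      ((fun u => SH u ∧ Dp u) (fun y => u y + (c : EReal))) :=
    fun u c h => ⟨hshiftSH u c h.1, hshiftDp u c h.2⟩
  have h1 := uW_eq_uP Ω SH hshiftSH f
  have h2 := lW_eq_lP Ω SH hshiftSH f
  have h3 := uW_eq_uP Ω (fun u => SH u ∧ Dp u) hshift2 f
  have h4 := lW_eq_lP Ω (fun u => SH u ∧ Dp u) hshift2 f
  refine ⟨h1, h2, h3, h4, ?_, ?_⟩
  · constructor
    · intro h z; rw [← h1 z, ← h2 z]; exact h z
    · intro h z; rw [h1 z, h2 z]; exact h z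
  · constructor
    · intro h z; rw [← h3 z, ← h4 z]; exact h z
    · intro h z; rw [h3 z, h4 z]; exact h z
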